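/- For all integers s ≥ 3 and t with s+2 ≤ t ≤ 2s-1, we have η > 0, where η = 2(1-α_{s,t}) - δ and δ = s - (2s-1)α_{s,t}. -/
import Mathlib


/-- The pair `(s,t)` is regular if `s ≥ 11` and `s+3 ≤ t ≤ 2s-4`, or if
`(s,t) ∈ {(10,14),(10,15)}`. -/
def IsRegularPair (s t : ℕ) : Prop :=
  (11 ≤ s ∧ s + 3 ≤ t ∧ t ≤ 2 * s - 4) ∨ (s = 10 ∧ t = 14) ∨ (s = 10 ∧ t = 15)

open Classical in
/-- The exponent `α = α_{s,t}`. -/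
noncomputable def ERalpha (s t : ℕ) : ℝ :=
  if IsRegularPair s t then
    (((s : ℝ) - 2) * ((t : ℝ) - (s : ℝ)) * ((t : ℝ) + (s : ℝ) - 1) + 2 * (t : ℝ) - 2 * (s : ℝ)) /
      ((2 * (s : ℝ) - 3) * ((t : ℝ) - (s : ℝ)) * ((t : ℝ) + (s : ℝ) - 1) - 2 * (s : ℝ) + 4)
  else
    (((s : ℝ) - 2) * ((t : ℝ) - (s : ℝ)) * ((s : ℝ) - 1) + (s : ℝ) - 1) /
      ((2 * (s : ℝ) - 3) * ((t : ℝ) - (s : ℝ)) * ((s : ℝ) - 1) + 2 * (s : ℝ) - (t : ℝ))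

/-- `δ = s - (2s-1)α`. -/
noncomputable def ERdelta (s t : ℕ) : ℝ := (s : ℝ) - (2 * (s : ℝ) - 1) * ERalpha s t

/-- `η = 2(1-α) - δ`. -/
noncomputable def EReta (s t : ℕ) : ℝ := 2 * (1 - ERalpha s t) - ERdelta s t

lemma key_frac (S num den : ℝ) (hden : 0 < den)
    (hnum : 0 < (2 * S - 3) * num - (S - 2) * den) :
    0 < 2 * (1 - num / den) - (S - (2 * S - 1) * (num / den)) := by
  have h : 2 * (1 - num / den) - (S - (2 * S - 1) * (num / den)) =
      ((2 * S - 3) * num - (S - 2) * den) / den := by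
    field_simp
    ring
  rw [h]
  exact div_pos hnum hden

/-- For all integers `s ≥ 3` and `s+2 ≤ t ≤ 2s-1`, we have `η > 0`, where
`η = 2(1-α) - δ` and `δ = s - (2s-1)α`. -/
theorem EReta_pos (s t : ℕ) (hs : 3 ≤ s) (ht1 : s + 2 ≤ t) (ht2 : t ≤ 2 * s - 1) :
    0 < EReta s t := by
  have hS : (3 : ℝ) ≤ (s : ℝ) := by exact_mod_cast hs
  have hT1 : (s : ℝ) + 2 ≤ (t : ℝ) := by exact_mod_cast ht1
  have hT2 : (t : ℝ) + 1 ≤ 2 * (s : ℝ) := by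
    have h : t + 1 ≤ 2 * s := by omega
    exact_mod_cast h
  unfold EReta ERdelta ERalpha
  by_cases h : IsRegularPair s t
  · rw [if_pos h]
    apply key_frac
    · nlinarith [mul_nonneg (mul_nonneg (show (0:ℝ) ≤ 2 * (s:ℝ) - 3 by linarith)
        (show (0:ℝ) ≤ (t:ℝ) - (s:ℝ) - 2 by linarith))
        (show (0:ℝ) ≤ (t:ℝ) + (s:ℝ) - 1 by linarith),
        mul_nonneg (show (0:ℝ) ≤ 2 * (s:ℝ) - 3 by linarith)
        (show (0:ℝ) ≤ (t:ℝ) + (s:ℝ) - 1 by linarith)]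
    · nlinarith [mul_nonneg (show (0:ℝ) ≤ 2 * (s:ℝ) - 3 by linarith)
        (show (0:ℝ) ≤ (t:ℝ) - (s:ℝ) by linarith),
        sq_nonneg ((s:ℝ) - 2)]
  · rw [if_neg h]
    apply key_frac
    · nlinarith [mul_nonneg (mul_nonneg (show (0:ℝ) ≤ 2 * (s:ℝ) - 3 by linarith)
        (show (0:ℝ) ≤ (t:ℝ) - (s:ℝ) by linarith))
        (show (0:ℝ) ≤ (s:ℝ) - 1 by linarith)]
    · nlinarith [mul_nonneg (show (0:ℝ) ≤ (s:ℝ) - 2 by linarith)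
        (show (0:ℝ) ≤ (t:ℝ) - 5 by linarith)]
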